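/- Let f satisfy (A1)–(A4) with termination number n, and additionally assume f is a contraction on each branch. Then f has a periodic orbit of period n, and each of the n closed subintervals of [0,1] determined by the partition points {f^{-i}(0) : i = 1,...,n-1} together with 0 and 1 contains exactly one point of this periodic orbit in its interior. -/

import Mathlib

set_option maxHeartbeats 1000000


/-- If `f` satisfies (A1)–(A4) with termination number `n` and is a contraction on each
branch, then `f` has a periodic orbit of period `n`, and each of the `n` closed
subintervals of `[0,1]` determined by the partition points `{f^{-i}(0) : i = 1,…,n-1}`
together with `0` and `1` contains exactly one orbit point in its interior.
Here `t : ℕ → ℝ` enumerates the partition points in increasing order with `t 0 = 0`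
and `t n = 1`, and `q : ℕ → ℝ` is the periodic orbit. -/
theorem periodic_orbit_in_partition (f : ℝ → ℝ) (c : ℝ) (hc : c ∈ Set.Ioo (0 : ℝ) 1)
    (hmaps : Set.MapsTo f (Set.Icc 0 1) (Set.Icc 0 1))
    (hA1 : f 1 < f 0)
    (hA2left : Filter.Tendsto f (nhdsWithin c (Set.Iio c)) (nhds 1))
    (hA2right : f c = 0)
    (hA3left : StrictMonoOn f (Set.Ico 0 c))
    (hA3right : StrictMonoOn f (Set.Icc c 1))
    (κ : ℝ) (hκ : κ < 1)
    (hcontract₁ : ∀ u ∈ Set.Ico (0 : ℝ) c, ∀ v ∈ Set.Ico (0 : ℝ) c,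
      |f u - f v| ≤ κ * |u - v|)
    (hcontract₂ : ∀ u ∈ Set.Icc c 1, ∀ v ∈ Set.Icc c 1,
      |f u - f v| ≤ κ * |u - v|)
    (n : ℕ) (hn : 2 ≤ n)
    (p : ℕ → ℝ) (hp0 : p 0 = 0)
    (hpmem : ∀ i < n, p i ∈ Set.Ico (0 : ℝ) 1)
    (hpstep : ∀ i, i + 1 < n → f (p (i + 1)) = p i)
    (hA4 : ¬ ∃ z ∈ Set.Icc (0 : ℝ) 1, f z = p (n - 1)) :
    ∃ t : ℕ → ℝ, t 0 = 0 ∧ t n = 1 ∧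
      (∀ i j, i < j → j ≤ n → t i < t j) ∧
      (∀ i, 1 ≤ i → i ≤ n - 1 → ∃ j, 1 ≤ j ∧ j ≤ n - 1 ∧ t i = p j) ∧
      (∀ j, 1 ≤ j → j ≤ n - 1 → ∃ i, 1 ≤ i ∧ i ≤ n - 1 ∧ t i = p j) ∧
      ∃ q : ℕ → ℝ,
        (∀ i < n, q i ∈ Set.Icc (0 : ℝ) 1) ∧
        (∀ i < n, f (q i) = q ((i + 1) % n)) ∧
        (∀ i < n, ∀ j < n, i ≠ j → q i ≠ q j) ∧
        (∀ i < n, ∃! j, j < n ∧ q j ∈ Set.Ioo (t i) (t (i + 1))) := by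
  obtain ⟨hc0, hc1⟩ := hc
  have hn0 : 0 < n := by omega
  -- memberships
  have hpIcc : ∀ i < n, p i ∈ Set.Icc (0:ℝ) 1 := fun i hi =>
    ⟨(hpmem i hi).1, le_of_lt (hpmem i hi).2⟩
  have hcIcc : c ∈ Set.Icc (0:ℝ) 1 := ⟨le_of_lt hc0, le_of_lt hc1⟩
  have h0Icc : (0:ℝ) ∈ Set.Icc (0:ℝ) 1 := ⟨le_refl _, zero_le_one⟩
  have h1Icc : (1:ℝ) ∈ Set.Icc (0:ℝ) 1 := ⟨zero_le_one, le_refl _⟩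
  -- monotonicity helpers
  have hmono₁ : ∀ u v : ℝ, 0 ≤ u → u ≤ v → v < c → f u ≤ f v := by
    intro u v hu huv hv
    rcases eq_or_lt_of_le huv with rfl | h
    · exact le_refl _
    · exact le_of_lt (hA3left ⟨hu, lt_of_le_of_lt huv hv⟩ ⟨le_trans hu huv, hv⟩ h)
  have hmono₂ : ∀ u v : ℝ, c ≤ u → u ≤ v → v ≤ 1 → f u ≤ f v := by
    intro u v hu huv hv
    rcases eq_or_lt_of_le huv with rfl | h
    · exact le_refl _
    · exact le_of_lt (hA3right ⟨hu, le_trans huv hv⟩ ⟨le_trans hu huv, hv⟩ h)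
  -- f < 1 on [0,1]
  have hflt1 : ∀ x : ℝ, 0 ≤ x → x < c → f x < 1 := by
    intro x hx hxc
    have hw : x < (x + c)/2 := by linarith
    have hwc : (x + c)/2 < c := by linarith
    have : f x < f ((x+c)/2) :=
      hA3left ⟨hx, hxc⟩ ⟨by linarith, hwc⟩ hw
    have h2 : f ((x+c)/2) ≤ 1 := (hmaps ⟨by linarith, by linarith⟩).2
    linarith
  have hf0lt1 : f 0 < 1 := hflt1 0 le_rfl hc0
  have hfub : ∀ x ∈ Set.Icc (0:ℝ) 1, f x < 1 := by
    intro x hx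
    rcases lt_or_ge x c with h | h
    · exact hflt1 x hx.1 h
    · have := hmono₂ x 1 h hx.2 le_rfl
      linarith
  -- global injectivity on [0,1]
  have hinj : ∀ u ∈ Set.Icc (0:ℝ) 1, ∀ v ∈ Set.Icc (0:ℝ) 1, f u = f v → u = v := by
    intro u hu v hv huv
    rcases lt_or_ge u c with h1 | h1 <;> rcases lt_or_ge v c with h2 | h2
    · exact hA3left.injOn ⟨hu.1, h1⟩ ⟨hv.1, h2⟩ huv
    · exfalso
      have hfu : f 0 ≤ f u := hmono₁ 0 u le_rfl hu.1 h1
      have hfv : f v ≤ f 1 := hmono₂ v 1 h2 hv.2 le_rfl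
      linarith
    · exfalso
      have hfv : f 0 ≤ f v := hmono₁ 0 v le_rfl hv.1 h2
      have hfu : f u ≤ f 1 := hmono₂ u 1 h1 hu.2 le_rfl
      linarith
    · exact hA3right.injOn ⟨h1, hu.2⟩ ⟨h2, hv.2⟩ huv
  -- p 1 = c
  have hp1c : p 1 = c := by
    have h01 : (0:ℕ) + 1 < n := by omega
    have := hpstep 0 h01
    rw [hp0] at this
    exact hinj (p 1) (hpIcc 1 (by omega)) c hcIcc (by rw [this, hA2right])
  -- distinctness of the p i
  have hshift : ∀ k i j : ℕ, i + k < n → j + k < n → p (i + k) = p (j + k) → p i = p j := by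
    intro k
    induction k with
    | zero => intro i j _ _ h; simpa using h
    | succ k ih =>
      intro i j hi hj h
      have hi' : (i + k) + 1 < n := by omega
      have hj' : (j + k) + 1 < n := by omega
      have e1 := hpstep (i+k) hi'
      have e2 := hpstep (j+k) hj'
      have h' : p (i + k + 1) = p (j + k + 1) := by
        rw [show i + k + 1 = i + (k+1) by ring, show j + k + 1 = j + (k+1) by ring]
        exact h
      have : p (i + k) = p (j + k) := by rw [← e1, ← e2, h']
      exact ih i j (by omega) (by omega) this
  have hpinj : ∀ i < n, ∀ j < n, p i = p j → i = j := by
    have key : ∀ d : ℕ, 1 ≤ d → d < n → p d ≠ 0 := by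
      intro d hd1 hdn hpd
      -- forward propagation: p (m + d) = p m
      have hfwd : ∀ m : ℕ, m + d < n → p (m + d) = p m := by
        intro m
        induction m with
        | zero => intro _; simpa [hp0] using hpd
        | succ m ih =>
          intro hm
          have h1 : (m + d) + 1 < n := by omega
          have e1 := hpstep (m + d) h1
          have e2 := hpstep m (by omega)
          have : f (p (m + 1 + d)) = f (p (m + 1)) := by
            rw [show m + 1 + d = (m + d) + 1 by ring, e1, e2, ih (by omega)]
          exact hinj _ (hpIcc _ (by omega)) _ (hpIcc _ (by omega)) this
      have h1 : p (n - 1) = p (n - 1 - d) := by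
        have := hfwd (n - 1 - d) (by omega)
        rw [show n - 1 - d + d = n - 1 by omega] at this
        exact this
      have h2 : f (p (n - d)) = p (n - 1 - d) := by
        have := hpstep (n - 1 - d) (by omega)
        rw [show n - 1 - d + 1 = n - d by omega] at this
        exact this
      exact hA4 ⟨p (n - d), hpIcc _ (by omega), by rw [h2, ← h1]⟩
    intro i hi j hj hij
    by_contra hne
    rcases Nat.lt_or_ge i j with h | h
    · have : p 0 = p (j - i) := by
        have := hshift i 0 (j - i) (by omega) (by omega)
        exact this (by rw [Nat.zero_add, show j - i + i = j by omega]; exact hij)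
      exact key (j - i) (by omega) (by omega) (by rw [← this, hp0])
    · have hlt : j < i := by omega
      have : p 0 = p (i - j) := by
        have := hshift j 0 (i - j) (by omega) (by omega)
        exact this (by rw [Nat.zero_add, show i - j + j = i by omega]; exact hij.symm)
      exact key (i - j) (by omega) (by omega) (by rw [← this, hp0])

  -- ============ construction of t ============
  have hpInjOn : Set.InjOn p ↑(Finset.range n) := by
    intro i hi j hj hij
    exact hpinj i (Finset.mem_range.1 hi) j (Finset.mem_range.1 hj) hij
  set s : Finset ℝ := (Finset.range n).image p with hsdef
  have hcard : s.card = n := by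
    rw [hsdef, Finset.card_image_of_injOn hpInjOn, Finset.card_range]
  set e := s.orderIsoOfFin hcard with hedef
  set t : ℕ → ℝ := fun i => if h : i < n then (e ⟨i, h⟩ : ℝ) else 1 with htdef
  have hts : ∀ i (h : i < n), t i ∈ s := by
    intro i h
    rw [htdef]
    simp only [dif_pos h]
    exact (e ⟨i, h⟩).2
  have htn : t n = 1 := by rw [htdef]; simp
  have hsmem : ∀ y ∈ s, ∃ j, j < n ∧ p j = y := by
    intro y hy
    rw [hsdef] at hy
    obtain ⟨j, hj, hjy⟩ := Finset.mem_image.1 hy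
    exact ⟨j, Finset.mem_range.1 hj, hjy⟩
  have hsbound : ∀ y ∈ s, 0 ≤ y ∧ y < 1 := by
    intro y hy
    obtain ⟨j, hj, rfl⟩ := hsmem y hy
    exact ⟨(hpmem j hj).1, (hpmem j hj).2⟩
  have htmono : ∀ i j : ℕ, i < j → j ≤ n → t i < t j := by
    intro i j hij hjn
    rcases eq_or_lt_of_le hjn with rfl | hjn'
    · rw [htn]
      exact (hsbound _ (hts i (by omega))).2
    · have hi : i < n := by omega
      have : e ⟨i, hi⟩ < e ⟨j, hjn'⟩ := by
        apply e.strictMono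
        exact hij
      rw [htdef]; simp only [dif_pos hi, dif_pos hjn']
      exact_mod_cast this
  have htIcc : ∀ i ≤ n, t i ∈ Set.Icc (0:ℝ) 1 := by
    intro i hi
    rcases eq_or_lt_of_le hi with rfl | hi'
    · rw [htn]; exact h1Icc
    · obtain ⟨h1, h2⟩ := hsbound _ (hts i hi')
      exact ⟨h1, le_of_lt h2⟩
  have htsurj : ∀ j < n, ∃ i, i < n ∧ t i = p j := by
    intro j hj
    have hpj : p j ∈ s := by
      rw [hsdef]; exact Finset.mem_image_of_mem p (Finset.mem_range.2 hj)
    set k := e.symm ⟨p j, hpj⟩ with hk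
    refine ⟨k.1, k.2, ?_⟩
    rw [htdef]
    simp only [dif_pos k.2]
    have : e k = ⟨p j, hpj⟩ := by rw [hk]; exact e.apply_symm_apply _
    rw [show (⟨k.1, k.2⟩ : Fin n) = k from rfl, this]
  have ht0 : t 0 = 0 := by
    have h0s : (0:ℝ) ∈ s := by
      rw [hsdef, ← hp0]; exact Finset.mem_image_of_mem p (Finset.mem_range.2 hn0)
    obtain ⟨j, hj, hpj⟩ := hsmem 0 h0s
    obtain ⟨i, hi, hti⟩ := htsurj j hj
    have hti0 : t i = 0 := by rw [hti, hpj]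
    have h2 : 0 ≤ t 0 := (htIcc 0 (by omega)).1
    rcases Nat.eq_zero_or_pos i with rfl | hpos
    · exact hti0
    · have h3 := htmono 0 i hpos (by omega)
      rw [hti0] at h3
      linarith

  classical
  have htle : ∀ i j : ℕ, i ≤ j → j ≤ n → t i ≤ t j := by
    intro i j hij hjn
    rcases eq_or_lt_of_le hij with rfl | h
    · exact le_refl _
    · exact le_of_lt (htmono i j h hjn)
  have hstrict_inside : ∀ i, i < n → ∀ m, m ≤ n → t i < t m → t m < t (i+1) → False := by
    intro i hi m hm h1 h2
    have hmi : i < m := by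
      by_contra h
      have := htle m i (by omega) (by omega)
      linarith
    have hmi2 : m < i + 1 := by
      by_contra h
      have := htle (i+1) m (by omega) hm
      linarith
    omega
  have hcorr : ∀ i, 1 ≤ i → i ≤ n - 1 → ∃ j, 1 ≤ j ∧ j ≤ n - 1 ∧ t i = p j := by
    intro i hi1 hin
    obtain ⟨j, hj, hpj⟩ := hsmem (t i) (hts i (by omega))
    have hj0 : j ≠ 0 := by
      intro h
      rw [h, hp0] at hpj
      have := htmono 0 i hi1 (by omega)
      rw [ht0] at this
      linarith [hpj]
    exact ⟨j, by omega, by omega, hpj.symm⟩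
  have hcorr₂ : ∀ j, 1 ≤ j → j ≤ n - 1 → ∃ i, 1 ≤ i ∧ i ≤ n - 1 ∧ t i = p j := by
    intro j hj1 hjn
    obtain ⟨i, hi, hti⟩ := htsurj j (by omega)
    have hi0 : i ≠ 0 := by
      intro h
      rw [h, ht0] at hti
      have : p j = p 0 := by rw [hp0, ← hti]
      have := hpinj j (by omega) 0 (by omega) this
      omega
    exact ⟨i, by omega, by omega, hti⟩
  -- c is a partition point
  obtain ⟨m, hm1, hmn, htm⟩ : ∃ m, 1 ≤ m ∧ m ≤ n - 1 ∧ t m = c := by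
    obtain ⟨i, h1, h2, h3⟩ := hcorr₂ 1 le_rfl (by omega)
    exact ⟨i, h1, h2, by rw [h3, hp1c]⟩
  have hbranch : ∀ i, i < n →
      (Set.Ico (t i) (t (i+1)) ⊆ Set.Ico 0 c) ∨ (Set.Ico (t i) (t (i+1)) ⊆ Set.Icc c 1) := by
    intro i hi
    rcases Nat.lt_or_ge i m with h | h
    · left
      intro x hx
      have h0 : 0 ≤ t i := (htIcc i (by omega)).1
      have h1 : t (i+1) ≤ t m := htle (i+1) m (by omega) (by omega)
      rw [htm] at h1
      exact ⟨le_trans h0 hx.1, lt_of_lt_of_le hx.2 h1⟩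
    · right
      intro x hx
      have h1 : t m ≤ t i := htle m i h (by omega)
      rw [htm] at h1
      have h2 : t (i+1) ≤ 1 := (htIcc (i+1) (by omega)).2
      exact ⟨le_trans h1 hx.1, le_of_lt (lt_of_lt_of_le hx.2 h2)⟩
  -- Lipschitz constant and continuity
  set κ₀ : ℝ := max κ 0 with hκ₀def
  have hκ₀0 : 0 ≤ κ₀ := le_max_right _ _
  have hκ₀1 : κ₀ < 1 := max_lt hκ zero_lt_one
  have hcon₁ : ∀ u ∈ Set.Ico (0:ℝ) c, ∀ v ∈ Set.Ico (0:ℝ) c, |f u - f v| ≤ κ₀ * |u - v| :=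
    fun u hu v hv => le_trans (hcontract₁ u hu v hv)
      (mul_le_mul_of_nonneg_right (le_max_left _ _) (abs_nonneg _))
  have hcon₂ : ∀ u ∈ Set.Icc c 1, ∀ v ∈ Set.Icc c 1, |f u - f v| ≤ κ₀ * |u - v| :=
    fun u hu v hv => le_trans (hcontract₂ u hu v hv)
      (mul_le_mul_of_nonneg_right (le_max_left _ _) (abs_nonneg _))
  have hlip₁ : LipschitzOnWith κ₀.toNNReal f (Set.Ico 0 c) := by
    apply LipschitzOnWith.of_dist_le_mul
    intro x hx y hy
    rw [Real.dist_eq, Real.dist_eq, Real.coe_toNNReal _ hκ₀0]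
    exact hcon₁ x hx y hy
  have hlip₂ : LipschitzOnWith κ₀.toNNReal f (Set.Icc c 1) := by
    apply LipschitzOnWith.of_dist_le_mul
    intro x hx y hy
    rw [Real.dist_eq, Real.dist_eq, Real.coe_toNNReal _ hκ₀0]
    exact hcon₂ x hx y hy
  have hcontIco : ContinuousOn f (Set.Ico 0 c) := hlip₁.continuousOn
  have hcontIcc : ContinuousOn f (Set.Icc c 1) := hlip₂.continuousOn
  -- the gap: f 1 < p (n-1) < f 0
  have hgap₁ : f 1 < p (n-1) := by
    by_contra h
    push_neg at h
    have h0 : (0:ℝ) ≤ p (n-1) := (hpmem (n-1) (by omega)).1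
    have : p (n-1) ∈ f '' Set.Icc c 1 := by
      apply intermediate_value_Icc (le_of_lt hc1) hcontIcc
      rw [hA2right]
      exact ⟨h0, h⟩
    obtain ⟨z, hz, hfz⟩ := this
    exact hA4 ⟨z, ⟨le_trans (le_of_lt hc0) hz.1, hz.2⟩, hfz⟩
  have hgap₂ : p (n-1) < f 0 := by
    by_contra h
    push_neg at h
    have hlt : p (n-1) < 1 := (hpmem (n-1) (by omega)).2
    have hev1 : ∀ᶠ x in nhdsWithin c (Set.Iio c), p (n-1) < f x :=
      hA2left.eventually (eventually_gt_nhds hlt)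
    have hev2 : Set.Ioo (0:ℝ) c ∈ nhdsWithin c (Set.Iio c) :=
      Ioo_mem_nhdsLT_of_mem ⟨hc0, le_refl c⟩
    obtain ⟨x, hx1, hx2⟩ := (hev1.and (Filter.eventually_of_mem hev2 (fun x hx => hx))).exists
    have : p (n-1) ∈ f '' Set.Icc 0 x := by
      apply intermediate_value_Icc (le_of_lt hx2.1)
        (hcontIco.mono (fun y hy => ⟨hy.1, lt_of_le_of_lt hy.2 hx2.2⟩))
      exact ⟨h, le_of_lt hx1⟩
    obtain ⟨z, hz, hfz⟩ := this
    exact hA4 ⟨z, ⟨hz.1, le_trans hz.2 (le_of_lt (lt_trans hx2.2 hc1))⟩, hfz⟩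
  -- locating points avoiding the partition
  have htlocate : ∀ y : ℝ, 0 ≤ y → y ≤ 1 → (∀ j ≤ n, y ≠ t j) →
      ∃ i, i < n ∧ t i < y ∧ y < t (i+1) := by
    intro y hy0 hy1 hyne
    have hP0 : t 0 < y := by
      rw [ht0]
      rcases eq_or_lt_of_le hy0 with h | h
      · exact absurd (h.symm.trans ht0.symm) (hyne 0 (by omega))
      · exact h
    set i := Nat.findGreatest (fun k => t k < y) (n-1) with hidef
    have hile : i ≤ n - 1 := Nat.findGreatest_le _
    have hP : t i < y := by
      have := Nat.findGreatest_spec (P := fun k => t k < y) (Nat.zero_le (n-1)) hP0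
      simpa [hidef] using this
    refine ⟨i, by omega, hP, ?_⟩
    rcases Nat.lt_or_ge (i+1) n with h | h
    · have hnot : ¬ t (i+1) < y := by
        apply Nat.findGreatest_is_greatest (P := fun k => t k < y) (n := n-1) (k := i+1)
        · rw [← hidef]; omega
        · omega
      rcases eq_or_lt_of_le (not_lt.1 hnot) with h' | h'
      · exact absurd h' (hyne (i+1) (by omega))
      · exact h'
    · have : i + 1 = n := by omega
      rw [this, htn]
      rcases eq_or_lt_of_le hy1 with h' | h'
      · exact absurd (h'.trans htn.symm) (hyne n (by omega))
      · exact h'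
  have havoid : ∀ x : ℝ, 0 ≤ x → x ≤ 1 →
      (∃ i, i < n ∧ t i < x ∧ x < t (i+1)) → ∀ j ≤ n, f x ≠ t j := by
    intro x hx0 hx1 ⟨i, hi, hxi, hxi'⟩ j hj hfx
    have hxIcc : x ∈ Set.Icc (0:ℝ) 1 := ⟨hx0, hx1⟩
    rcases Nat.eq_zero_or_pos j with rfl | hj0
    · rw [ht0] at hfx
      have : x = c := hinj x hxIcc c hcIcc (by rw [hfx, hA2right])
      rw [← htm] at this
      exact hstrict_inside i hi m (by omega) (this ▸ hxi) (this ▸ hxi')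
    rcases eq_or_lt_of_le hj with rfl | hjn
    · rw [htn] at hfx
      exact absurd hfx (ne_of_lt (hfub x hxIcc))
    obtain ⟨a, ha1, ha2, hta⟩ := hcorr j hj0 (by omega)
    rcases eq_or_lt_of_le (show a ≤ n - 1 from ha2) with rfl | halt
    · exact hA4 ⟨x, hxIcc, by rw [hfx, hta]⟩
    · have hstep : f (p (a+1)) = p a := hpstep a (by omega)
      have hxpa : x = p (a+1) :=
        hinj x hxIcc (p (a+1)) (hpIcc (a+1) (by omega)) (by rw [hfx, hta, hstep])
      obtain ⟨i', hi'1, hi'2, hti'⟩ := hcorr₂ (a+1) (by omega) (by omega)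
      rw [← hti'] at hxpa
      exact hstrict_inside i hi i' (by omega) (hxpa ▸ hxi) (hxpa ▸ hxi')

  -- branch-wise helpers on partition intervals
  have hmonoI : ∀ i, i < n → ∀ u v : ℝ, u ∈ Set.Ico (t i) (t (i+1)) →
      v ∈ Set.Ico (t i) (t (i+1)) → u < v → f u < f v := by
    intro i hi u v hu hv huv
    rcases hbranch i hi with hb | hb
    · exact hA3left (hb hu) (hb hv) huv
    · exact hA3right (hb hu) (hb hv) huv
  have hcontI : ∀ i, i < n → ContinuousOn f (Set.Ico (t i) (t (i+1))) := by
    intro i hi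
    rcases hbranch i hi with hb | hb
    · exact hcontIco.mono hb
    · exact hcontIcc.mono hb
  have hlipI : ∀ i, i < n → ∀ u v : ℝ, u ∈ Set.Ico (t i) (t (i+1)) →
      v ∈ Set.Ico (t i) (t (i+1)) → |f u - f v| ≤ κ₀ * |u - v| := by
    intro i hi u v hu hv
    rcases hbranch i hi with hb | hb
    · exact hcon₁ u (hb hu) v (hb hv)
    · exact hcon₂ u (hb hu) v (hb hv)
  have hIcoIcc : ∀ i, i < n → Set.Ico (t i) (t (i+1)) ⊆ Set.Icc (0:ℝ) 1 := by
    intro i hi x hx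
    exact ⟨le_trans (htIcc i (by omega)).1 hx.1,
      le_trans (le_of_lt hx.2) (htIcc (i+1) (by omega)).2⟩
  -- construction of σ
  have himg_ex : ∀ i : ℕ, ∃ j : ℕ, i < n →
      (j < n ∧ ∀ x : ℝ, t i < x → x < t (i+1) → t j < f x ∧ f x < t (j+1)) := by
    intro i
    by_cases hi : i < n
    swap
    · exact ⟨0, fun h => absurd h hi⟩
    set mid := (t i + t (i+1))/2 with hmiddef
    have htt := htmono i (i+1) (by omega) (by omega)
    have hm1 : t i < mid := by rw [hmiddef]; linarith
    have hm2 : mid < t (i+1) := by rw [hmiddef]; linarith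
    have hmid01 : mid ∈ Set.Icc (0:ℝ) 1 := hIcoIcc i hi ⟨le_of_lt hm1, hm2⟩
    have hmidav : ∀ j ≤ n, f mid ≠ t j := havoid mid hmid01.1 hmid01.2 ⟨i, hi, hm1, hm2⟩
    have hfmid01 := hmaps hmid01
    obtain ⟨j, hj, hj1, hj2⟩ := htlocate (f mid) hfmid01.1 hfmid01.2 hmidav
    refine ⟨j, fun _ => ⟨hj, ?_⟩⟩
    intro x hx1 hx2
    have hx01 : x ∈ Set.Icc (0:ℝ) 1 := hIcoIcc i hi ⟨le_of_lt hx1, hx2⟩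
    have hxav : ∀ j' ≤ n, f x ≠ t j' := havoid x hx01.1 hx01.2 ⟨i, hi, hx1, hx2⟩
    rcases le_total x mid with hxm | hxm
    · have hfle : f x ≤ f mid := by
        rcases eq_or_lt_of_le hxm with rfl | h
        · exact le_refl _
        · exact le_of_lt (hmonoI i hi x mid ⟨le_of_lt hx1, hx2⟩ ⟨le_of_lt hm1, hm2⟩ h)
      constructor
      · by_contra hcon
        push_neg at hcon
        have hlt : f x < t j := lt_of_le_of_ne hcon (hxav j (by omega))
        have : t j ∈ f '' Set.Icc x mid := by
          apply intermediate_value_Icc hxm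
          · exact (hcontI i hi).mono (fun y hy =>
              ⟨le_trans (le_of_lt hx1) hy.1, lt_of_le_of_lt hy.2 hm2⟩)
          · exact ⟨le_of_lt hlt, le_of_lt hj1⟩
        obtain ⟨ξ, hξ, hfξ⟩ := this
        exact havoid ξ (le_trans hx01.1 hξ.1) (le_trans hξ.2 hmid01.2)
          ⟨i, hi, lt_of_lt_of_le hx1 hξ.1, lt_of_le_of_lt hξ.2 hm2⟩ j (by omega) hfξ
      · exact lt_of_le_of_lt hfle hj2
    · have hfle : f mid ≤ f x := by
        rcases eq_or_lt_of_le hxm with h | h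
        · rw [h]
        · exact le_of_lt (hmonoI i hi mid x ⟨le_of_lt hm1, hm2⟩ ⟨le_of_lt hx1, hx2⟩ h)
      constructor
      · exact lt_of_lt_of_le hj1 hfle
      · by_contra hcon
        push_neg at hcon
        have hlt : t (j+1) < f x := lt_of_le_of_ne hcon (hxav (j+1) (by omega)).symm
        have : t (j+1) ∈ f '' Set.Icc mid x := by
          apply intermediate_value_Icc hxm
          · exact (hcontI i hi).mono (fun y hy =>
              ⟨le_trans (le_of_lt hm1) hy.1, lt_of_le_of_lt hy.2 hx2⟩)
          · exact ⟨le_of_lt hj2, le_of_lt hlt⟩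
        obtain ⟨ξ, hξ, hfξ⟩ := this
        exact havoid ξ (le_trans hmid01.1 hξ.1) (le_trans hξ.2 hx01.2)
          ⟨i, hi, lt_of_lt_of_le hm1 hξ.1, lt_of_le_of_lt hξ.2 hx2⟩ (j+1) (by omega) hfξ
  choose σ hσ using himg_ex
  have hσlt : ∀ i, i < n → σ i < n := fun i hi => (hσ i hi).1
  have hσmap : ∀ i, i < n → ∀ x : ℝ, t i < x → x < t (i+1) →
      t (σ i) < f x ∧ f x < t (σ i + 1) := fun i hi => (hσ i hi).2
  -- endpoint bounds
  have hupp : ∀ i, i < n → f (t i) < t (σ i + 1) := by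
    intro i hi
    have htt := htmono i (i+1) (by omega) (by omega)
    set mid := (t i + t (i+1))/2 with hmiddef
    have hm1 : t i < mid := by rw [hmiddef]; linarith
    have hm2 : mid < t (i+1) := by rw [hmiddef]; linarith
    have h1 : f (t i) < f mid :=
      hmonoI i hi (t i) mid ⟨le_refl _, htt⟩ ⟨le_of_lt hm1, hm2⟩ hm1
    exact lt_trans h1 (hσmap i hi mid hm1 hm2).2
  have hlow : ∀ i, i < n → t (σ i) ≤ f (t i) := by
    intro i hi
    by_contra hcon
    push_neg at hcon
    set δ := t (σ i) - f (t i) with hδdef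
    have hδ0 : 0 < δ := by rw [hδdef]; linarith
    have htt := htmono i (i+1) (by omega) (by omega)
    set x := min ((t i + t (i+1))/2) (t i + δ/(κ₀+1)) with hxdef
    have hx1 : t i < x := by
      rw [hxdef]
      apply lt_min (by linarith)
      have : 0 < δ/(κ₀+1) := div_pos hδ0 (by linarith)
      linarith
    have hx2 : x < t (i+1) := by
      rw [hxdef]
      exact lt_of_le_of_lt (min_le_left _ _) (by linarith)
    have hxd : x - t i ≤ δ/(κ₀+1) := by
      have := min_le_right ((t i + t (i+1))/2) (t i + δ/(κ₀+1))
      rw [hxdef]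
      linarith
    have hlip := hlipI i hi x (t i) ⟨le_of_lt hx1, hx2⟩ ⟨le_refl _, htt⟩
    have habs : |x - t i| = x - t i := abs_of_pos (by linarith)
    rw [habs] at hlip
    have hfx := (hσmap i hi x hx1 hx2).1
    have h1 : f x - f (t i) > δ := by rw [hδdef]; linarith
    have h2 : |f x - f (t i)| ≥ δ := le_trans (le_of_lt h1) (le_abs_self _)
    have h3 : κ₀ * (x - t i) ≤ κ₀ * (δ/(κ₀+1)) :=
      mul_le_mul_of_nonneg_left hxd hκ₀0
    have h4 : κ₀ * (δ/(κ₀+1)) < δ := by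
      rw [div_eq_inv_mul, ← mul_assoc]
      have hk1 : 0 < κ₀ + 1 := by linarith
      have : κ₀ * (κ₀+1)⁻¹ < 1 := by
        rw [mul_inv_lt_iff₀ hk1]
        linarith
      calc κ₀ * (κ₀+1)⁻¹ * δ < 1 * δ := by
            apply mul_lt_mul_of_pos_right this hδ0
        _ = δ := one_mul δ
    linarith
  have hHmap : ∀ i, i < n → ∀ x : ℝ, x ∈ Set.Ico (t i) (t (i+1)) →
      f x ∈ Set.Ico (t (σ i)) (t (σ i + 1)) := by
    intro i hi x hx
    rcases eq_or_lt_of_le hx.1 with rfl | h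
    · exact ⟨hlow i hi, hupp i hi⟩
    · have := hσmap i hi x h hx.2
      exact ⟨le_of_lt this.1, this.2⟩
  -- Lemma A : exact image of partition points
  have hLA : ∀ i, 1 ≤ i → i < n → f (t i) = t (σ i) := by
    intro i hi1 hin
    obtain ⟨a, ha1, ha2, hta⟩ := hcorr i hi1 (by omega)
    have hfti : f (t i) = p (a-1) := by
      have := hpstep (a-1) (by omega)
      rw [show a - 1 + 1 = a by omega] at this
      rw [hta, this]
    obtain ⟨k, hkn, htk⟩ : ∃ k, k ≤ n - 1 ∧ t k = p (a-1) := by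
      rcases eq_or_lt_of_le (show 1 ≤ a from ha1) with h | h
      · exact ⟨0, by omega, by rw [ht0, ← h, hp0]⟩
      · obtain ⟨k, hk1, hk2, hk3⟩ := hcorr₂ (a-1) (by omega) (by omega)
        exact ⟨k, hk2, hk3⟩
    have heq : f (t i) = t k := by rw [hfti, htk]
    have hσin := hσlt i hin
    have h1 : t (σ i) ≤ t k := heq ▸ hlow i hin
    have h2 : t k < t (σ i + 1) := heq ▸ hupp i hin
    have hk1 : σ i ≤ k := by
      by_contra h
      have := htmono k (σ i) (by omega) (by omega)
      linarith
    have hk2 : k < σ i + 1 := by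
      by_contra h
      have := htle (σ i + 1) k (by omega) (by omega)
      linarith
    rw [heq]
    congr 1
    omega

  have ht1pos : 0 < t 1 := by
    have := htmono 0 1 (by omega) (by omega)
    rwa [ht0] at this
  have hf0low : t (σ 0) ≤ f 0 := by have := hlow 0 hn0; rwa [ht0] at this
  have hf0upp : f 0 < t (σ 0 + 1) := by have := hupp 0 hn0; rwa [ht0] at this
  -- Lemma B at the first interval, when t 1 < c
  have hLB₀ : t 1 < c → f (t 1) = t (σ 0 + 1) := by
    intro h1c
    obtain ⟨a, ha1, ha2, hta⟩ := hcorr 1 le_rfl (by omega)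
    have hfti : f (t 1) = p (a-1) := by
      have := hpstep (a-1) (by omega)
      rw [show a - 1 + 1 = a by omega] at this
      rw [hta, this]
    obtain ⟨k, hkn, htk⟩ : ∃ k, k ≤ n - 1 ∧ t k = p (a-1) := by
      rcases eq_or_lt_of_le (show 1 ≤ a from ha1) with h | h
      · exact ⟨0, by omega, by rw [ht0, ← h, hp0]⟩
      · obtain ⟨k, hk1, hk2, hk3⟩ := hcorr₂ (a-1) (by omega) (by omega)
        exact ⟨k, hk2, hk3⟩
    have heq : f (t 1) = t k := by rw [hfti, htk]
    -- lower bound : t (σ 0) < f (t 1)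
    have hmidlt : t (σ 0) < f (t 1) := by
      set mid := t 1 / 2 with hmiddef
      have hm1 : t 0 < mid := by rw [ht0, hmiddef]; linarith
      have hm2 : mid < t 1 := by rw [hmiddef]; linarith
      have h1 := (hσmap 0 hn0 mid hm1 hm2).1
      have h2 : f mid < f (t 1) := hA3left ⟨by rw [hmiddef]; linarith, lt_trans hm2 h1c⟩
        ⟨le_of_lt ht1pos, h1c⟩ hm2
      linarith
    -- upper bound : f (t 1) ≤ t (σ 0 + 1)
    have hub : f (t 1) ≤ t (σ 0 + 1) := by
      by_contra hcon
      push_neg at hcon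
      set δ := f (t 1) - t (σ 0 + 1) with hδdef
      have hδ0 : 0 < δ := by rw [hδdef]; linarith
      set x := max (t 1 / 2) (t 1 - δ/(κ₀+1)) with hxdef
      have hd0 : 0 < δ/(κ₀+1) := div_pos hδ0 (by linarith)
      have hx1 : 0 < x := by
        rw [hxdef]
        exact lt_max_of_lt_left (by linarith)
      have hx2 : x < t 1 := by
        rw [hxdef]
        apply max_lt (by linarith) (by linarith)
      have hxd : t 1 - x ≤ δ/(κ₀+1) := by
        have := le_max_right (t 1 / 2) (t 1 - δ/(κ₀+1))
        rw [hxdef]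
        linarith
      have hlip := hcon₁ (t 1) ⟨le_of_lt ht1pos, h1c⟩ x ⟨le_of_lt hx1, lt_trans hx2 h1c⟩
      have habs : |t 1 - x| = t 1 - x := abs_of_pos (by linarith)
      rw [habs] at hlip
      have hfx : f x < t (σ 0 + 1) := by
        have := (hσmap 0 hn0 x (by rw [ht0]; exact hx1) hx2).2
        exact this
      have h1 : f (t 1) - f x > δ := by rw [hδdef]; linarith
      have h2 : |f (t 1) - f x| ≥ δ := le_trans (le_of_lt h1) (le_abs_self _)
      have h4 : κ₀ * (δ/(κ₀+1)) < δ := by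
        rw [div_eq_inv_mul, ← mul_assoc]
        have hk1 : 0 < κ₀ + 1 := by linarith
        have hlt1 : κ₀ * (κ₀+1)⁻¹ < 1 := by
          rw [mul_inv_lt_iff₀ hk1]
          linarith
        calc κ₀ * (κ₀+1)⁻¹ * δ < 1 * δ := mul_lt_mul_of_pos_right hlt1 hδ0
          _ = δ := one_mul δ
      have h3 : κ₀ * (t 1 - x) ≤ κ₀ * (δ/(κ₀+1)) := mul_le_mul_of_nonneg_left hxd hκ₀0
      linarith
    rw [heq] at hmidlt hub ⊢
    have hσ0n := hσlt 0 hn0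
    have hk1 : σ 0 + 1 ≤ k := by
      by_contra h
      have := htle k (σ 0) (by omega) (by omega)
      linarith
    have hk2 : k ≤ σ 0 + 1 := by
      by_contra h
      have := htmono (σ 0 + 1) k (by omega) (by omega)
      linarith
    congr 1
    omega
  -- injectivity of σ
  have hσinj : ∀ i, i < n → ∀ i', i' < n → σ i = σ i' → i = i' := by
    have key : ∀ i', 1 ≤ i' → i' < n → σ i' = σ 0 → False := by
      intro i' hi'1 hi'n hσeq
      have hfti' : f (t i') = t (σ 0) := by rw [hLA i' hi'1 hi'n, hσeq]
      have hti'Icc := htIcc i' (by omega)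
      rcases lt_or_ge (t i') c with hlt | hge
      · -- t i' < c hence t 1 < c
        have ht1i' : t 1 ≤ t i' := htle 1 i' hi'1 (by omega)
        have h1c : t 1 < c := lt_of_le_of_lt ht1i' hlt
        have h1 : f (t 1) ≤ f (t i') := hmono₁ (t 1) (t i') (le_of_lt ht1pos) ht1i' hlt
        have h2 := hLB₀ h1c
        have h3 := htmono (σ 0) (σ 0 + 1) (by omega) (Nat.succ_le_of_lt (hσlt 0 hn0))
        rw [h2] at h1
        rw [hfti'] at h1
        linarith
      · -- t i' ≥ c
        have h1 : f (t i') ≤ f 1 := hmono₂ (t i') 1 hge hti'Icc.2 le_rfl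
        obtain ⟨k, hk1, hk2, htk⟩ := hcorr₂ (n-1) (by omega) le_rfl
        have hlt1 : t (σ 0) < t k := by
          rw [htk, ← hfti']
          linarith [hgap₁, h1]
        have hlt2 : t k < t (σ 0 + 1) := by
          rw [htk]
          linarith [hgap₂, hf0upp]
        exact hstrict_inside (σ 0) (hσlt 0 hn0) k (by omega) hlt1 hlt2
    intro i hi i' hi' hσeq
    by_contra hne
    rcases Nat.eq_zero_or_pos i with rfl | hipos
    · rcases Nat.eq_zero_or_pos i' with rfl | hi'pos
      · omega
      · exact key i' hi'pos hi' hσeq.symm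
    rcases Nat.eq_zero_or_pos i' with rfl | hi'pos
    · exact key i hipos hi hσeq
    · have h1 : f (t i) = f (t i') := by rw [hLA i hipos hi, hLA i' hi'pos hi', hσeq]
      have := hinj (t i) (htIcc i (by omega)) (t i') (htIcc i' (by omega)) h1
      rcases Nat.lt_or_ge i i' with h | h
      · have := htmono i i' h (by omega); linarith [this]
      · have hlt : i' < i := by omega
        have := htmono i' i hlt (by omega); linarith [this]
  have hσsurj : ∀ k, k < n → ∃ i, i < n ∧ σ i = k := by
    intro k hk
    have himg : (Finset.range n).image σ = Finset.range n := by
      apply Finset.eq_of_subset_of_card_le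
      · intro x hx
        obtain ⟨i, hi, rfl⟩ := Finset.mem_image.1 hx
        exact Finset.mem_range.2 (hσlt i (Finset.mem_range.1 hi))
      · rw [Finset.card_image_of_injOn, Finset.card_range]
        intro i hi j hj hij
        exact hσinj i (Finset.mem_range.1 hi) j (Finset.mem_range.1 hj) hij
    have : k ∈ (Finset.range n).image σ := by rw [himg]; exact Finset.mem_range.2 hk
    obtain ⟨i, hi, hik⟩ := Finset.mem_image.1 this
    exact ⟨i, Finset.mem_range.1 hi, hik⟩
  -- t (σ 0) = p (n-1)
  have hσ0val : t (σ 0) = p (n-1) := by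
    obtain ⟨k, hk1, hk2, htk⟩ := hcorr₂ (n-1) (by omega) le_rfl
    have hσ0n := hσlt 0 hn0
    have hkσ : k ≤ σ 0 := by
      by_contra h
      have h1 : t (σ 0 + 1) ≤ t k := htle (σ 0 + 1) k (by omega) (by omega)
      rw [htk] at h1
      linarith
    rcases eq_or_lt_of_le hkσ with h | h
    · rw [← h, htk]
    · exfalso
      obtain ⟨i', hi', hσi'⟩ := hσsurj k (by omega)
      have hi'0 : i' ≠ 0 := by
        intro h0
        rw [h0] at hσi'
        omega
      have : f (t i') = p (n-1) := by
        rw [hLA i' (by omega) hi', hσi', htk]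
      exact hA4 ⟨t i', htIcc i' (by omega), this⟩
  -- the indexing map ρ
  have hρex : ∀ i : ℕ, ∃ j : ℕ, i < n → (j < n ∧ t i = p j) := by
    intro i
    rcases Nat.eq_zero_or_pos i with rfl | hipos
    · exact ⟨0, fun _ => ⟨by omega, by rw [ht0, hp0]⟩⟩
    · by_cases hi : i < n
      · obtain ⟨j, hj1, hj2, htj⟩ := hcorr i hipos (by omega)
        exact ⟨j, fun _ => ⟨by omega, htj⟩⟩
      · exact ⟨0, fun h => absurd h hi⟩
  choose ρ hρ using hρex
  have hρlt : ∀ i, i < n → ρ i < n := fun i hi => (hρ i hi).1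
  have htp : ∀ i, i < n → t i = p (ρ i) := fun i hi => (hρ i hi).2
  have hρ0 : ρ 0 = 0 := by
    have h1 : p (ρ 0) = p 0 := by rw [← htp 0 hn0, ht0, hp0]
    exact hpinj (ρ 0) (hρlt 0 hn0) 0 hn0 h1
  have hρpos : ∀ i, 1 ≤ i → i < n → 1 ≤ ρ i := by
    intro i hi1 hin
    by_contra h
    have hρi0 : ρ i = 0 := by omega
    have : t i = t 0 := by rw [htp i hin, hρi0, hp0, ht0]
    have := htmono 0 i hi1 (by omega)
    linarith
  have hρstep : ∀ i, i < n → ρ (σ i) = (ρ i + (n-1)) % n := by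
    intro i hi
    rcases Nat.eq_zero_or_pos i with rfl | hipos
    · have h1 : p (ρ (σ 0)) = p (n-1) := by rw [← htp (σ 0) (hσlt 0 hn0), hσ0val]
      have h2 := hpinj (ρ (σ 0)) (hρlt (σ 0) (hσlt 0 hn0)) (n-1) (by omega) h1
      rw [h2, hρ0, Nat.zero_add, Nat.mod_eq_of_lt (by omega)]
    · have hρi1 := hρpos i hipos hi
      have hρin := hρlt i hi
      have h1 : f (t i) = p (ρ i - 1) := by
        have := hpstep (ρ i - 1) (by omega)
        rw [show ρ i - 1 + 1 = ρ i by omega] at this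
        rw [htp i hi, this]
      have h2 : p (ρ (σ i)) = p (ρ i - 1) := by
        rw [← htp (σ i) (hσlt i hi), ← hLA i hipos hi, h1]
      have h3 := hpinj (ρ (σ i)) (hρlt (σ i) (hσlt i hi)) (ρ i - 1) (by omega) h2
      rw [h3]
      have h4 : ρ i + (n-1) = (ρ i - 1) + n := by omega
      rw [h4, Nat.add_mod_right, Nat.mod_eq_of_lt (by omega)]
  have hρiter : ∀ k : ℕ, ∀ i, i < n → σ^[k] i < n ∧ ρ (σ^[k] i) = (ρ i + k*(n-1)) % n := by
    intro k
    induction k with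
    | zero =>
      intro i hi
      refine ⟨by simpa using hi, ?_⟩
      simp only [Function.iterate_zero_apply]
      rw [Nat.zero_mul, Nat.add_zero, Nat.mod_eq_of_lt (hρlt i hi)]
    | succ k ih =>
      intro i hi
      obtain ⟨h1, h2⟩ := ih i hi
      rw [Function.iterate_succ_apply']
      refine ⟨hσlt _ h1, ?_⟩
      rw [hρstep _ h1, h2, Nat.mod_add_mod]
      congr 1
      ring
  have hσn_id : ∀ i, i < n → σ^[n] i = i := by
    intro i hi
    obtain ⟨h1, h2⟩ := hρiter n i hi
    have h3 : (ρ i + n*(n-1)) % n = ρ i := by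
      rw [Nat.mul_comm, Nat.add_mul_mod_self_right, Nat.mod_eq_of_lt (hρlt i hi)]
    have h4 : t (σ^[n] i) = t i := by
      rw [htp _ h1, htp i hi, h2, h3]
    by_contra hne
    rcases Nat.lt_or_ge (σ^[n] i) i with h | h
    · have := htmono _ i h (by omega); linarith
    · have hlt : i < σ^[n] i := by omega
      have := htmono i _ hlt (by omega); linarith

  -- iterates respect the interval dynamics
  have hiterH : ∀ k : ℕ, ∀ i, i < n → ∀ x : ℝ, x ∈ Set.Ico (t i) (t (i+1)) →
      f^[k] x ∈ Set.Ico (t (σ^[k] i)) (t (σ^[k] i + 1)) := by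
    intro k
    induction k with
    | zero => intro i hi x hx; simpa using hx
    | succ k ih =>
      intro i hi x hx
      rw [Function.iterate_succ_apply, Function.iterate_succ_apply]
      exact ih (σ i) (hσlt i hi) (f x) (hHmap i hi x hx)
  have hitercont : ∀ k : ℕ, ∀ i, i < n → ContinuousOn (f^[k]) (Set.Ico (t i) (t (i+1))) := by
    intro k
    induction k with
    | zero => intro i hi; simpa using continuousOn_id
    | succ k ih =>
      intro i hi
      rw [Function.iterate_succ]
      exact ContinuousOn.comp (ih (σ i) (hσlt i hi)) (hcontI i hi) (hHmap i hi)
  -- iterates stay in [0,1]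
  have hiter01 : ∀ x ∈ Set.Icc (0:ℝ) 1, ∀ k : ℕ, f^[k] x ∈ Set.Icc (0:ℝ) 1 := by
    intro x hx k
    induction k with
    | zero => simpa using hx
    | succ k ih =>
      rw [Function.iterate_succ_apply']
      exact hmaps ih
  -- 0 is not periodic
  have hQn0 : f^[n] 0 ≠ 0 := by
    intro h
    have hchain : ∀ k : ℕ, 1 ≤ k → k ≤ n - 1 → f^[n-k] 0 = p k := by
      intro k
      induction k with
      | zero => omega
      | succ k ih =>
        intro _ hk
        rcases Nat.eq_zero_or_pos k with rfl | hkpos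
        · -- base : f^[n-1] 0 = p 1 = c
          have h2 : f^[(n-1)+1] 0 = f (f^[n-1] 0) := Function.iterate_succ_apply' f (n-1) 0
          rw [show (n-1)+1 = n by omega] at h2
          have h1 : f (f^[n-1] 0) = f c := by rw [hA2right, ← h2]; exact h
          have h3 := hinj (f^[n-1] 0) (hiter01 0 h0Icc (n-1)) c hcIcc h1
          rw [h3, ← hp1c]
        · have hkn : k ≤ n - 1 := by omega
          have hik := ih hkpos hkn
          have h1 : f (f^[n-(k+1)] 0) = f (p (k+1)) := by
            rw [hpstep k (by omega), ← hik]
            conv_rhs => rw [show n - k = (n-(k+1))+1 by omega]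
            rw [Function.iterate_succ_apply']
          exact hinj _ (hiter01 0 h0Icc _) _ (hpIcc (k+1) (by omega)) h1
    have := hchain (n-1) (by omega) le_rfl
    rw [show n - (n-1) = 1 by omega] at this
    simp only [Function.iterate_one] at this
    exact hA4 ⟨0, h0Icc, this⟩
  -- no partition point is n-periodic
  have htnoper : ∀ a, a < n → f^[n] (t a) ≠ t a := by
    have hchain : ∀ b, b < n → f^[b] (p b) = 0 := by
      intro b
      induction b with
      | zero => intro _; simpa using hp0
      | succ b ih =>
        intro hb
        rw [Function.iterate_succ_apply, hpstep b hb]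
        exact ih (by omega)
    intro a ha hper
    have hb := hρlt a ha
    have h1 : f^[ρ a] (t a) = 0 := by rw [htp a ha]; exact hchain (ρ a) hb
    have h2 : f^[n] 0 = 0 := by
      have hcomm : f^[n] (f^[ρ a] (t a)) = f^[ρ a] (f^[n] (t a)) := by
        rw [← Function.iterate_add_apply, ← Function.iterate_add_apply, Nat.add_comm]
      rw [h1] at hcomm
      rw [hcomm, hper, h1]
    exact hQn0 h2
  -- the invariant interval  [t j₀, f 1]
  set j₀ := σ (n-1) with hj₀def
  have hn1lt : n - 1 < n := by omega
  have hj₀lt : j₀ < n := hσlt (n-1) hn1lt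
  have hcle : c ≤ t (n-1) := by rw [← htm]; exact htle m (n-1) hmn (by omega)
  have htn1lt1 : t (n-1) < 1 := by
    have := htmono (n-1) n hn1lt le_rfl
    rwa [htn] at this
  have hfj₀ : f (t (n-1)) = t j₀ := hLA (n-1) (by omega) hn1lt
  have hab : t j₀ ≤ f 1 := by
    rw [← hfj₀]
    exact hmono₂ (t (n-1)) 1 hcle (le_of_lt htn1lt1) le_rfl
  have hf1lt : f 1 < t (j₀ + 1) := by
    have hf1le : f 1 ≤ t (j₀ + 1) := by
      by_contra hcon
      push_neg at hcon
      set δ := f 1 - t (j₀ + 1) with hδdef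
      have hδ0 : 0 < δ := by rw [hδdef]; linarith
      set x := max ((t (n-1) + 1)/2) (1 - δ/(κ₀+1)) with hxdef
      have hd0 : 0 < δ/(κ₀+1) := div_pos hδ0 (by linarith)
      have hx1 : t (n-1) < x := by
        rw [hxdef]
        exact lt_max_of_lt_left (by linarith)
      have hx2 : x < 1 := by
        rw [hxdef]
        exact max_lt (by linarith) (by linarith)
      have hxd : 1 - x ≤ δ/(κ₀+1) := by
        have := le_max_right ((t (n-1) + 1)/2) (1 - δ/(κ₀+1))
        rw [hxdef]
        linarith
      have hxIcc : x ∈ Set.Icc c 1 := ⟨le_trans hcle (le_of_lt hx1), le_of_lt hx2⟩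
      have hlip := hcon₂ 1 ⟨le_of_lt hc1, le_refl _⟩ x hxIcc
      have habs : |1 - x| = 1 - x := abs_of_pos (by linarith)
      rw [habs] at hlip
      have hfx : f x < t (j₀ + 1) := by
        have hx2' : x < t (n-1+1) := by rw [show n-1+1 = n by omega, htn]; exact hx2
        exact (hσmap (n-1) hn1lt x hx1 hx2').2
      have h1 : f 1 - f x > δ := by rw [hδdef]; linarith
      have h2 : |f 1 - f x| ≥ δ := le_trans (le_of_lt h1) (le_abs_self _)
      have h4 : κ₀ * (δ/(κ₀+1)) < δ := by
        rw [div_eq_inv_mul, ← mul_assoc]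
        have hk1 : 0 < κ₀ + 1 := by linarith
        have hlt1 : κ₀ * (κ₀+1)⁻¹ < 1 := by
          rw [mul_inv_lt_iff₀ hk1]
          linarith
        calc κ₀ * (κ₀+1)⁻¹ * δ < 1 * δ := mul_lt_mul_of_pos_right hlt1 hδ0
          _ = δ := one_mul δ
      have h3 : κ₀ * (1 - x) ≤ κ₀ * (δ/(κ₀+1)) := mul_le_mul_of_nonneg_left hxd hκ₀0
      linarith
    rcases eq_or_lt_of_le hf1le with heq | hlt
    · exfalso
      rcases Nat.lt_or_ge (j₀ + 1) n with hjn | hjn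
      · obtain ⟨a, ha1, ha2, hta⟩ := hcorr (j₀+1) (by omega) (by omega)
        rcases eq_or_lt_of_le (show a ≤ n-1 from ha2) with rfl | han
        · exact hA4 ⟨1, h1Icc, by rw [heq, hta]⟩
        · have h1 : f 1 = f (p (a+1)) := by
            rw [heq, hta, hpstep a (by omega)]
          have h2 := hinj 1 h1Icc (p (a+1)) (hpIcc (a+1) (by omega)) h1
          have := (hpmem (a+1) (by omega)).2
          rw [← h2] at this
          linarith
      · have hj₀n : j₀ + 1 = n := by omega
        rw [hj₀n, htn] at heq
        exact absurd heq (ne_of_lt (hfub 1 h1Icc))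
    · exact hlt
  have hσiterj₀ : σ^[n-1] j₀ = n - 1 := by
    have h1 : σ^[n] (n-1) = n - 1 := hσn_id (n-1) hn1lt
    rw [show n = (n-1) + 1 by omega, Function.iterate_succ_apply] at h1
    exact h1
  have hCinv : ∀ x ∈ Set.Icc (t j₀) (f 1), f^[n] x ∈ Set.Icc (t j₀) (f 1) := by
    intro x hx
    have hxH : x ∈ Set.Ico (t j₀) (t (j₀+1)) := ⟨hx.1, lt_of_le_of_lt hx.2 hf1lt⟩
    have hy := hiterH (n-1) j₀ hj₀lt x hxH
    rw [hσiterj₀] at hy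
    have hyn : f^[n-1] x < 1 := by
      have := hy.2
      rwa [show n - 1 + 1 = n by omega, htn] at this
    have hiter : f^[n] x = f (f^[n-1] x) := by
      conv_lhs => rw [show n = (n-1)+1 by omega]
      rw [Function.iterate_succ_apply']
    constructor
    · rw [hiter]
      have h5 := hHmap (n-1) hn1lt (f^[n-1] x) hy
      rw [← hj₀def] at h5
      exact h5.1
    · rw [hiter]
      exact hmono₂ (f^[n-1] x) 1 (le_trans hcle hy.1) (le_of_lt hyn) le_rfl
  -- fixed point of f^[n] by the intermediate value theorem
  obtain ⟨Q, hQC, hQfix⟩ : ∃ Q ∈ Set.Icc (t j₀) (f 1), f^[n] Q - Q = 0 := by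
    have hsub : Set.Icc (t j₀) (f 1) ⊆ Set.Ico (t j₀) (t (j₀+1)) :=
      fun x hx => ⟨hx.1, lt_of_le_of_lt hx.2 hf1lt⟩
    have hcontg : ContinuousOn (fun x => f^[n] x - x) (Set.Icc (t j₀) (f 1)) :=
      ((hitercont n j₀ hj₀lt).mono hsub).sub continuousOn_id
    have h0mem : (0:ℝ) ∈ Set.Icc ((fun x => f^[n] x - x) (f 1)) ((fun x => f^[n] x - x) (t j₀)) := by
      constructor
      · have := (hCinv (f 1) ⟨hab, le_refl _⟩).2
        simp only
        linarith
      · have := (hCinv (t j₀) ⟨le_refl _, hab⟩).1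
        simp only
        linarith
    have := intermediate_value_Icc' hab hcontg h0mem
    obtain ⟨Q, hQ, hQ0⟩ := this
    exact ⟨Q, hQ, hQ0⟩
  have hQfix' : f^[n] Q = Q := by linarith [hQfix]
  have hQH : Q ∈ Set.Ico (t j₀) (t (j₀+1)) := ⟨hQC.1, lt_of_le_of_lt hQC.2 hf1lt⟩
  -- the orbit
  have hqmem : ∀ k : ℕ, f^[k] Q ∈ Set.Ico (t (σ^[k] j₀)) (t (σ^[k] j₀ + 1)) :=
    fun k => hiterH k j₀ hj₀lt Q hQH
  have hσklt : ∀ k : ℕ, σ^[k] j₀ < n := fun k => (hρiter k j₀ hj₀lt).1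
  have hqper : ∀ k : ℕ, f^[n] (f^[k] Q) = f^[k] Q := by
    intro k
    rw [← Function.iterate_add_apply, Nat.add_comm, Function.iterate_add_apply, hQfix']
  have hqstrict : ∀ k : ℕ, t (σ^[k] j₀) < f^[k] Q := by
    intro k
    rcases eq_or_lt_of_le (hqmem k).1 with heq | hlt
    · exfalso
      exact htnoper (σ^[k] j₀) (hσklt k) (by rw [heq]; exact hqper k)
    · exact hlt
  -- injectivity of the orbit indexing
  have hmodinj : ∀ a k k' : ℕ, k < n → k' < n →
      (a + k*(n-1)) % n = (a + k'*(n-1)) % n → k = k' := by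
    intro a k k' hk hk' h
    have hcast : ((a + k*(n-1) : ℕ) : ZMod n) = ((a + k'*(n-1) : ℕ) : ZMod n) :=
      (ZMod.natCast_eq_natCast_iff _ _ _).2 h
    have hn1 : ((n-1 : ℕ) : ZMod n) = -1 := by
      apply eq_neg_of_add_eq_zero_left
      have h9 : ((n-1 : ℕ) : ZMod n) + ((1:ℕ) : ZMod n) = ((n : ℕ) : ZMod n) := by
        rw [← Nat.cast_add, show n-1+1 = n by omega]
      rw [Nat.cast_one, ZMod.natCast_self] at h9
      exact h9
    have hc2 : ∀ b : ℕ, ((a + b*(n-1) : ℕ) : ZMod n) =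
        (a : ZMod n) + (b : ZMod n) * ((n-1 : ℕ) : ZMod n) := by
      intro b; rw [Nat.cast_add, Nat.cast_mul]
    rw [hc2 k, hc2 k', hn1] at hcast
    have h2 : ((k:ZMod n)) = (k' : ZMod n) := by
      have h3 := add_left_cancel hcast
      rw [mul_neg_one, mul_neg_one] at h3
      exact neg_injective h3
    have h4 : k % n = k' % n := (ZMod.natCast_eq_natCast_iff _ _ _).1 h2
    rwa [Nat.mod_eq_of_lt hk, Nat.mod_eq_of_lt hk'] at h4
  have hσiterinj : ∀ k, k < n → ∀ k', k' < n → σ^[k] j₀ = σ^[k'] j₀ → k = k' := by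
    intro k hk k' hk' h
    have h1 := (hρiter k j₀ hj₀lt).2
    have h2 := (hρiter k' j₀ hj₀lt).2
    rw [h, h2] at h1
    exact hmodinj (ρ j₀) k k' hk hk' (by rw [h1])
  have hcover : ∀ i, i < n → ∃ k, k < n ∧ σ^[k] j₀ = i := by
    intro i hi
    have himg : (Finset.range n).image (fun k => σ^[k] j₀) = Finset.range n := by
      apply Finset.eq_of_subset_of_card_le
      · intro x hx
        obtain ⟨k, hk, rfl⟩ := Finset.mem_image.1 hx
        exact Finset.mem_range.2 (hσklt k)
      · rw [Finset.card_image_of_injOn, Finset.card_range]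
        intro a ha b hb hh
        exact hσiterinj a (Finset.mem_range.1 ha) b (Finset.mem_range.1 hb) hh
    have : i ∈ (Finset.range n).image (fun k => σ^[k] j₀) := by
      rw [himg]; exact Finset.mem_range.2 hi
    obtain ⟨k, hk, hkk⟩ := Finset.mem_image.1 this
    exact ⟨k, Finset.mem_range.1 hk, hkk⟩
  have hIcodisj : ∀ a, a < n → ∀ b, b < n → a ≠ b → ∀ x : ℝ,
      x ∈ Set.Ico (t a) (t (a+1)) → x ∈ Set.Ico (t b) (t (b+1)) → False := by
    intro a ha b hb hne x hxa hxb
    rcases Nat.lt_or_ge a b with h | h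
    · have := htle (a+1) b (by omega) (by omega)
      linarith [hxa.2, hxb.1]
    · have hlt : b < a := by omega
      have := htle (b+1) a (by omega) (by omega)
      linarith [hxb.2, hxa.1]
  -- ============ conclusion ============
  refine ⟨t, ht0, htn, htmono, hcorr, hcorr₂, fun k => f^[k] Q, ?_, ?_, ?_, ?_⟩
  · intro i _
    exact hIcoIcc (σ^[i] j₀) (hσklt i) (hqmem i)
  · intro i hi
    rcases Nat.lt_or_ge (i+1) n with h | h
    · show f (f^[i] Q) = f^[(i+1) % n] Q
      rw [Nat.mod_eq_of_lt h, Function.iterate_succ_apply']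
    · have hin : i + 1 = n := by omega
      show f (f^[i] Q) = f^[(i+1) % n] Q
      rw [hin, Nat.mod_self]
      simp only [Function.iterate_zero_apply]
      have h2 : f^[i+1] Q = f (f^[i] Q) := Function.iterate_succ_apply' f i Q
      rw [← h2, hin, hQfix']
  · intro i hi j hj hne heq
    simp only at heq
    apply hne
    apply hσiterinj i hi j hj
    by_contra hσne
    have hmj := hqmem j
    rw [← heq] at hmj
    exact hIcodisj (σ^[i] j₀) (hσklt i) (σ^[j] j₀) (hσklt j) hσne (f^[i] Q)
      (hqmem i) hmj
  · intro i hi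
    obtain ⟨k, hk, hkk⟩ := hcover i hi
    refine ⟨k, ⟨hk, ?_⟩, ?_⟩
    · constructor
      · rw [← hkk]; exact hqstrict k
      · rw [← hkk]; exact (hqmem k).2
    · intro k' ⟨hk', hk'mem⟩
      have ha := hσklt k'
      have haeq : σ^[k'] j₀ = i := by
        by_contra hne
        exact hIcodisj (σ^[k'] j₀) ha i hi hne (f^[k'] Q) (hqmem k')
          ⟨le_of_lt hk'mem.1, hk'mem.2⟩
      exact hσiterinj k' hk' k hk (by rw [haeq, hkk])
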